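/- arXiv:0908.3473 — 4 statements merged into one kernel-verified Lean document; each statement's English description precedes it below -/
import Mathlib

section
/- Let Λ ⊆ ℤ^d, let Γ ⊂ ℤ^d \ {0} be finite with a linear function strictly positive on Γ and bounded below on Λ, and let 𝔅 = Λ \ 𝔇 for a finite set 𝔇. If (𝒫, 𝒩) and (𝒫′, 𝒩′) are both partitions of 𝔅 satisfying (𝒫 + Γ) ∩ 𝔅 = 𝒩 and (𝒫′ + Γ) ∩ 𝔅 = 𝒩′, then 𝒫 = 𝒫′ and 𝒩 = 𝒩′. -/
/-- Uniqueness of the winning/losing partition of a game board. -/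
theorem winning_losing_positions_unique (d : ℕ) (Γ : Finset (Fin d → ℤ))
    (hΓ0 : (0 : Fin d → ℤ) ∉ Γ)
    (Λ : Set (Fin d → ℤ))
    (ℓ : (Fin d → ℤ) →ₗ[ℤ] ℤ)
    (hpos : ∀ γ ∈ Γ, 0 < ℓ γ)
    (hbdd : ∃ c : ℤ, ∀ p ∈ Λ, c ≤ ℓ p)
    (𝔇 : Set (Fin d → ℤ)) (h𝔇 : 𝔇.Finite)
    (𝔅 : Set (Fin d → ℤ)) (h𝔅 : 𝔅 = Λ \ 𝔇)
    (P N P' N' : Set (Fin d → ℤ))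
    (hPN : P ∪ N = 𝔅) (hPNdisj : P ∩ N = ∅)
    (hP'N' : P' ∪ N' = 𝔅) (hP'N'disj : P' ∩ N' = ∅)
    (hN : {q | ∃ p ∈ P, ∃ γ ∈ Γ, q = p + γ} ∩ 𝔅 = N)
    (hN' : {q | ∃ p ∈ P', ∃ γ ∈ Γ, q = p + γ} ∩ 𝔅 = N') :
    P = P' ∧ N = N' := by
  obtain ⟨c, hc⟩ := hbdd
  have hPsub : P ⊆ 𝔅 := hPN ▸ Set.subset_union_left
  have hP'sub : P' ⊆ 𝔅 := hP'N' ▸ Set.subset_union_left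
  have hcb : ∀ q ∈ 𝔅, c ≤ ℓ q := by
    intro q hq
    exact hc q ((h𝔅 ▸ hq).1)
  have hPiff : ∀ q ∈ 𝔅, (q ∈ P ↔ ¬ ∃ p ∈ P, ∃ γ ∈ Γ, q = p + γ) := by
    intro q hq
    constructor
    · intro hqP hex
      have hqN : q ∈ N := hN ▸ ⟨hex, hq⟩
      have : q ∈ P ∩ N := ⟨hqP, hqN⟩
      rw [hPNdisj] at this
      exact this
    · intro h
      have hq' : q ∈ P ∪ N := hPN ▸ hq
      rcases hq' with h1 | h1
      · exact h1
      · rw [← hN] at h1; exact absurd h1.1 h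
  have hP'iff : ∀ q ∈ 𝔅, (q ∈ P' ↔ ¬ ∃ p ∈ P', ∃ γ ∈ Γ, q = p + γ) := by
    intro q hq
    constructor
    · intro hqP hex
      have hqN : q ∈ N' := hN' ▸ ⟨hex, hq⟩
      have : q ∈ P' ∩ N' := ⟨hqP, hqN⟩
      rw [hP'N'disj] at this
      exact this
    · intro h
      have hq' : q ∈ P' ∪ N' := hP'N' ▸ hq
      rcases hq' with h1 | h1
      · exact h1
      · rw [← hN'] at h1; exact absurd h1.1 h
  have key : ∀ n : ℕ, ∀ q ∈ 𝔅, (ℓ q - c).toNat = n → (q ∈ P ↔ q ∈ P') := by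
    intro n
    induction n using Nat.strong_induction_on with
    | _ n ih =>
      intro q hq hn
      have step : ∀ p γ, γ ∈ Γ → q = p + γ → p ∈ 𝔅 → (ℓ p - c).toNat < n := by
        intro p γ hγ he hp
        have hγpos := hpos γ hγ
        have hql : ℓ q = ℓ p + ℓ γ := by rw [he, map_add]
        have h1 : c ≤ ℓ p := hcb p hp
        omega
      rw [hPiff q hq, hP'iff q hq]
      constructor
      · intro h hex
        obtain ⟨p, hp, γ, hγ, he⟩ := hex
        have hp𝔅 := hP'sub hp
        have : p ∈ P := (ih _ (step p γ hγ he hp𝔅) p hp𝔅 rfl).mpr hp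
        exact h ⟨p, this, γ, hγ, he⟩
      · intro h hex
        obtain ⟨p, hp, γ, hγ, he⟩ := hex
        have hp𝔅 := hPsub hp
        have : p ∈ P' := (ih _ (step p γ hγ he hp𝔅) p hp𝔅 rfl).mp hp
        exact h ⟨p, this, γ, hγ, he⟩
  have hPP' : P = P' := by
    ext q
    constructor
    · intro h; exact (key _ q (hPsub h) rfl).mp h
    · intro h; exact (key _ q (hP'sub h) rfl).mpr h
  refine ⟨hPP', ?_⟩
  have h1 : N = 𝔅 \ P := by
    apply Set.eq_of_subset_of_subset
    · intro q hq
      refine ⟨hPN ▸ Set.mem_union_right P hq, fun hP => ?_⟩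
      have : q ∈ P ∩ N := ⟨hP, hq⟩
      rw [hPNdisj] at this; exact this
    · intro q hq
      rcases (hPN ▸ hq.1 : q ∈ P ∪ N) with h | h
      · exact absurd h hq.2
      · exact h
  have h2 : N' = 𝔅 \ P' := by
    apply Set.eq_of_subset_of_subset
    · intro q hq
      refine ⟨hP'N' ▸ Set.mem_union_right P' hq, fun hP => ?_⟩
      have : q ∈ P' ∩ N' := ⟨hP, hq⟩
      rw [hP'N'disj] at this; exact this
    · intro q hq
      rcases (hP'N' ▸ hq.1 : q ∈ P' ∪ N') with h | h
      · exact absurd h hq.2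
      · exact h
  rw [h1, h2, hPP']
end

section
/- Let Λ ⊆ ℤ^d be nonempty, let Γ ⊂ ℤ^d \ {0} be finite with a linear function strictly positive on Γ and bounded below on Λ, and let 𝔅 = Λ \ 𝔇 for a finite set 𝔇 that is a downward-closed set for the Γ-order. Then there exists a partition 𝔅 = 𝒫 ⊎ 𝒩 with (𝒫 + Γ) ∩ 𝔅 = 𝒩. -/
/-- Auxiliary predicate: `q` is an N-position (some option lies in `P`). Defined by
well-founded recursion on `(ℓ q - c).toNat`, which strictly decreases along moves. -/
def isNAux (d : ℕ) (Γ : Finset (Fin d → ℤ)) (B : Set (Fin d → ℤ))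
    (ℓ : (Fin d → ℤ) →ₗ[ℤ] ℤ) (c : ℤ)
    (hpos : ∀ γ ∈ Γ, 0 < ℓ γ) (hB : ∀ p ∈ B, c ≤ ℓ p)
    (q : Fin d → ℤ) : Prop :=
  ∃ γ, ∃ _ : γ ∈ Γ, ∃ _ : q - γ ∈ B, ¬ isNAux d Γ B ℓ c hpos hB (q - γ)
termination_by (ℓ q - c).toNat
decreasing_by
  rename_i hγ hqγ
  have h1 : c ≤ ℓ (q - γ) := hB _ hqγ
  have h2 : 0 < ℓ γ := hpos γ hγ
  have h3 : ℓ (q - γ) = ℓ q - ℓ γ := by simp [map_sub]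
  omega

/-- Existence of the winning/losing partition of a game board. -/
theorem winning_losing_positions_exist (d : ℕ) (Γ : Finset (Fin d → ℤ))
    (hΓ0 : (0 : Fin d → ℤ) ∉ Γ)
    (Λ : Set (Fin d → ℤ)) (hΛ : Λ.Nonempty)
    (ℓ : (Fin d → ℤ) →ₗ[ℤ] ℤ)
    (hpos : ∀ γ ∈ Γ, 0 < ℓ γ)
    (hbdd : ∃ c : ℤ, ∀ p ∈ Λ, c ≤ ℓ p)
    (𝔇 : Set (Fin d → ℤ)) (h𝔇 : 𝔇.Finite)
    (h𝔇ideal : ∀ q ∈ 𝔇, ∀ p ∈ Λ,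
      q - p ∈ AddSubmonoid.closure (Γ : Set (Fin d → ℤ)) → p ∈ 𝔇) :
    ∃ P N : Set (Fin d → ℤ), P ∪ N = Λ \ 𝔇 ∧ P ∩ N = ∅ ∧
      {q | ∃ p ∈ P, ∃ γ ∈ Γ, q = p + γ} ∩ (Λ \ 𝔇) = N := by
  obtain ⟨c, hc⟩ := hbdd
  set B : Set (Fin d → ℤ) := Λ \ 𝔇 with hBdef
  have hB : ∀ p ∈ B, c ≤ ℓ p := fun p hp => hc p hp.1
  set f : (Fin d → ℤ) → Prop := isNAux d Γ B ℓ c hpos hB with hf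
  have hfiff : ∀ q, f q ↔ ∃ γ, γ ∈ Γ ∧ q - γ ∈ B ∧ ¬ f (q - γ) := by
    intro q
    rw [hf, isNAux]
    constructor
    · rintro ⟨γ, h1, h2, h3⟩; exact ⟨γ, h1, h2, h3⟩
    · rintro ⟨γ, h1, h2, h3⟩; exact ⟨γ, h1, h2, h3⟩
  refine ⟨{q ∈ B | ¬ f q}, {q ∈ B | f q}, ?_, ?_, ?_⟩
  · ext q; simp only [Set.mem_union, Set.mem_setOf_eq]; tauto
  · ext q; simp only [Set.mem_inter_iff, Set.mem_setOf_eq, Set.mem_empty_iff_false]; tauto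
  · ext q
    simp only [Set.mem_inter_iff, Set.mem_setOf_eq]
    constructor
    · rintro ⟨⟨p, ⟨hpB, hpf⟩, γ, hγ, rfl⟩, hqB⟩
      refine ⟨hqB, (hfiff _).2 ⟨γ, hγ, ?_, ?_⟩⟩
      · simpa using hpB
      · simpa using hpf
    · rintro ⟨hqB, hqf⟩
      obtain ⟨γ, hγ, hmem, hnot⟩ := (hfiff q).1 hqf
      exact ⟨⟨q - γ, ⟨hmem, hnot⟩, γ, hγ, by ring⟩, hqB⟩
end

section
/- Let Γ₂ ⊆ (ℤ/2ℤ)^d be a finite set with 0 ∉ Γ₂. Then there exists a subset P ⊆ (ℤ/2ℤ)^d such that P + Γ₂ = (ℤ/2ℤ)^d \ P, i.e., Γ₂ sustains a pattern. -/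
/-- Any finite `Γ₂ ⊆ (ℤ/2)^d` with `0 ∉ Γ₂` sustains a pattern `P`:
`P + Γ₂` is exactly the complement of `P`. -/
theorem exists_sustained_pattern (d : ℕ) (Γ₂ : Finset (Fin d → ZMod 2))
    (h0 : (0 : Fin d → ZMod 2) ∉ Γ₂) :
    ∃ P : Set (Fin d → ZMod 2),
      {x | ∃ p ∈ P, ∃ γ ∈ Γ₂, x = p + γ} = Pᶜ := by
  have selfadd : ∀ a : Fin d → ZMod 2, a + a = 0 := by
    intro a; funext i
    have : ∀ x : ZMod 2, x + x = 0 := by decide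
    exact this (a i)
  -- independent sets
  set S : Set (Set (Fin d → ZMod 2)) :=
    {P | ∀ p ∈ P, ∀ γ ∈ Γ₂, p + γ ∉ P} with hS
  obtain ⟨M, hM⟩ : ∃ M, Maximal (· ∈ S) M := by
    apply zorn_subset
    intro c hcS hchain
    refine ⟨⋃₀ c, ?_, fun s hs => Set.subset_sUnion_of_mem hs⟩
    intro p hp γ hγ hq
    obtain ⟨A, hA, hpA⟩ := hp
    obtain ⟨B, hB, hqB⟩ := hq
    rcases hchain.total hA hB with h | h
    · exact hcS hB p (h hpA) γ hγ hqB
    · exact hcS hA p hpA γ hγ (h hqB)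
  refine ⟨M, ?_⟩
  ext x
  simp only [Set.mem_setOf_eq, Set.mem_compl_iff]
  constructor
  · rintro ⟨p, hp, γ, hγ, rfl⟩
    exact hM.prop p hp γ hγ
  · intro hx
    -- M ∪ {x} is not independent, by maximality
    by_contra hno
    push_neg at hno
    have hins : insert x M ∈ S := by
      intro p hp γ hγ hq
      rcases Set.mem_insert_iff.mp hp with rfl | hpM
      · rcases Set.mem_insert_iff.mp hq with heq | hqM
        · -- x + γ = x ⇒ γ = 0
          apply h0
          have : γ = 0 := add_left_cancel (heq.trans (add_zero p).symm)
          rwa [this] at hγ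
        · -- x + γ ∈ M ⇒ x = (x+γ) + γ contradicts hno
          exact hno (p + γ) hqM γ hγ (by rw [add_assoc, selfadd, add_zero])
      · rcases Set.mem_insert_iff.mp hq with heq | hqM
        · exact hno p hpM γ hγ heq.symm
        · exact hM.prop p hpM γ hγ hqM
    have := hM.2 hins (Set.subset_insert x M)
    exact hx (this (Set.mem_insert x M))
end

section
/- Consider the lattice game on ℕ^d with a rule set Γ, board 𝔅 = ℕ^d \ {0} (misère play: defeated positions 𝔇 = {0}). Then every position p ∈ 𝔅 has a Γ-path in ℕ^d to 0 if and only if every Γ-minimal element of 𝔅 lies in Γ. -/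
/-- In misère play on `ℕ^d` (board `ℕ^d \ {0}`), every position has a
`Γ`-path to `0` in `ℕ^d` iff every `Γ`-minimal element of the board lies
in `Γ`. -/
theorem path_to_zero_iff_minimal_mem (d : ℕ) (Γ : Finset (Fin d → ℤ))
    (hΓ0 : (0 : Fin d → ℤ) ∉ Γ)
    (ℓ : (Fin d → ℤ) →ₗ[ℤ] ℤ)
    (hpos : ∀ γ ∈ Γ, 0 < ℓ γ)
    (hnonneg : ∀ p : Fin d → ℕ, 0 ≤ ℓ (fun i => (p i : ℤ))) :
    (∀ p : Fin d → ℕ, p ≠ 0 → ∃ r : ℕ, ∃ f : ℕ → (Fin d → ℕ),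
        f 0 = p ∧ f r = 0 ∧
        ∀ k < r, (fun i => (f k i : ℤ) - (f (k + 1) i : ℤ)) ∈ Γ)
      ↔
    (∀ p : Fin d → ℕ, p ≠ 0 →
        (¬ ∃ q : Fin d → ℕ, q ≠ 0 ∧
            (fun i => (p i : ℤ) - (q i : ℤ)) ∈ Γ) →
        (fun i => (p i : ℤ)) ∈ Γ) := by
  constructor
  · intro hpath p hp hmin
    obtain ⟨r, f, hf0, hfr, hstep⟩ := hpath p hp
    cases r with
    | zero => exact absurd (hf0 ▸ hfr) hp
    | succ r =>
      have h01 : (fun i => (f 0 i : ℤ) - (f 1 i : ℤ)) ∈ Γ := hstep 0 (Nat.succ_pos r)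
      rw [hf0] at h01
      by_cases h1 : f 1 = 0
      · have heq : (fun i => (p i : ℤ)) = fun i => (p i : ℤ) - (f 1 i : ℤ) := by
          funext i; simp [h1]
        rwa [heq]
      · exact absurd ⟨f 1, h1, h01⟩ hmin
  · intro hmin p hp
    suffices key : ∀ n : ℕ, ∀ p : Fin d → ℕ, p ≠ 0 →
        (ℓ (fun i => (p i : ℤ))).toNat = n → ∃ r : ℕ, ∃ f : ℕ → (Fin d → ℕ),
        f 0 = p ∧ f r = 0 ∧
        ∀ k < r, (fun i => (f k i : ℤ) - (f (k + 1) i : ℤ)) ∈ Γ by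
      exact key _ p hp rfl
    intro n
    induction n using Nat.strong_induction_on with
    | _ n ih =>
      intro p hp hn
      by_cases hm : ∃ q : Fin d → ℕ, q ≠ 0 ∧ (fun i => (p i : ℤ) - (q i : ℤ)) ∈ Γ
      · obtain ⟨q, hq, hdiff⟩ := hm
        have hlq : ℓ (fun i => (q i : ℤ)) < ℓ (fun i => (p i : ℤ)) := by
          have h := hpos _ hdiff
          have heq : (fun i => (p i : ℤ) - (q i : ℤ))
              = (fun i => (p i : ℤ)) - (fun i => (q i : ℤ)) := rfl
          rw [heq, map_sub] at h
          linarith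
        have htn : (ℓ (fun i => (q i : ℤ))).toNat < n := by
          have h1 := hnonneg q
          have h2 := hnonneg p
          omega
        obtain ⟨r, f, hf0, hfr, hstep⟩ := ih _ htn q hq rfl
        refine ⟨r + 1, fun k => if k = 0 then p else f (k - 1), by simp, by simp [hfr], ?_⟩
        intro k hk
        cases k with
        | zero => simpa [hf0] using hdiff
        | succ j => simpa using hstep j (by omega)
      · have hmem := hmin p hp hm
        refine ⟨1, fun k => if k = 0 then p else 0, rfl, rfl, ?_⟩
        intro k hk
        interval_cases k
        simpa using hmem
end
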